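/- Let n ≥ 1, let λ₁ ≥ λ₂ ≥ ⋯ ≥ λₙ ≥ 0 be real weights, and let e ∈ ℝⁿ with eᵢ ≥ 0 for all i. Then OM_λ(e) = Σᵢ λᵢ e₍ᵢ₎ equals the optimal value of the linear program min { Σ_{k=1}^n u_k + Σ_{i=1}^n v_i : u, v ∈ ℝⁿ, u_k + v_i ≥ λ_k eᵢ for all i, k }; that is, every pair (u, v) ∈ ℝⁿ × ℝⁿ satisfying u_k + v_i ≥ λ_k eᵢ for all i, k has Σ_k u_k + Σ_i v_i ≥ OM_λ(e), and there exists such a feasible pair attaining equality. -/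

import Mathlib

/-- The ordered median function: `OM lam e = ∑ i, lam i * e_(i)`, where
`e_(1) ≥ ⋯ ≥ e_(n)` is the decreasing rearrangement of `e`. -/
noncomputable def OM {n : ℕ} (lam e : Fin n → ℝ) : ℝ :=
  ∑ i : Fin n, lam i * e (Tuple.sort e i.rev)

/-- `OM_λ(e)` equals the optimal value of the LP
`min { ∑ₖ uₖ + ∑ᵢ vᵢ : uₖ + vᵢ ≥ λₖ eᵢ ∀ i,k }`: every feasible pair `(u,v)` has
objective value at least `OM_λ(e)`, and some feasible pair attains it. -/
theorem stmt3 {n : ℕ} (hn : 1 ≤ n) (lam e : Fin n → ℝ)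
    (hmono : Antitone lam) (hpos : ∀ i, 0 ≤ lam i) (he : ∀ i, 0 ≤ e i) :
    IsLeast {x : ℝ | ∃ u v : Fin n → ℝ,
        (∀ i k : Fin n, lam k * e i ≤ u k + v i) ∧
        x = (∑ k : Fin n, u k) + ∑ i : Fin n, v i}
      (OM lam e) := by
  set σ := Tuple.sort e with hσ
  set d : Fin n → ℝ := fun j => e (σ j.rev) with hd
  have hOM : OM lam e = ∑ i : Fin n, lam i * d i := rfl
  have hdmono : Antitone d := by
    intro a b hab
    exact Tuple.monotone_sort e (Fin.rev_le_rev.mpr hab)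
  have hdnn : ∀ j, 0 ≤ d j := fun j => he _
  -- ℕ-indexed versions
  set L : ℕ → ℝ := fun j => if h : j < n then lam ⟨j, h⟩ else 0 with hL
  set E : ℕ → ℝ := fun j => if h : j < n then d ⟨j, h⟩ else 0 with hE
  set D : ℕ → ℝ := fun j => L j - L (j + 1) with hD
  have hLnn : ∀ j, 0 ≤ L j := by
    intro j; simp only [hL]; split
    · exact hpos _
    · exact le_refl 0
  have hLanti : Antitone L := by
    intro a b hab
    by_cases hb : b < n
    · have ha : a < n := lt_of_le_of_lt hab hb
      simp only [hL, dif_pos ha, dif_pos hb]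
      exact hmono (by exact_mod_cast hab)
    · have : L b = 0 := by simp [hL, hb]
      rw [this]; exact hLnn a
  have hD0 : ∀ j, 0 ≤ D j := fun j => sub_nonneg.mpr (hLanti (Nat.le_succ j))
  have hEnn : ∀ j, 0 ≤ E j := by
    intro j; simp only [hE]; split
    · exact hdnn _
    · exact le_refl 0
  have hEanti : Antitone E := by
    intro a b hab
    by_cases hb : b < n
    · have ha : a < n := lt_of_le_of_lt hab hb
      simp only [hE, dif_pos ha, dif_pos hb]
      exact hdmono (by exact_mod_cast hab)
    · have : E b = 0 := by simp [hE, hb]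
      rw [this]; exact hEnn a
  have hLsum : ∀ k, ∑ j ∈ Finset.Ico k n, D j = L k - L n := by
    intro k
    rcases le_or_gt k n with h | h
    · rw [Finset.sum_Ico_eq_sub _ h, Finset.sum_range_sub' L, Finset.sum_range_sub' L]
      ring
    · rw [Finset.Ico_eq_empty (by omega), Finset.sum_empty]
      have h1 : L k = 0 := by simp only [hL]; rw [dif_neg (by omega : ¬ k < n)]
      have h2 : L n = 0 := by simp [hL]
      rw [h1, h2, sub_zero]
  have hLn : L n = 0 := by simp [hL]
  -- explicit feasible pair
  set u : Fin n → ℝ := fun k => ∑ j ∈ Finset.Ico k.val n, D j * E j with hu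
  set v : Fin n → ℝ := fun i => ∑ j ∈ Finset.range n, D j * max (e i - E j) 0 with hv
  have hfeas : ∀ i k : Fin n, lam k * e i ≤ u k + v i := by
    intro i k
    have hk : lam k = L k.val := by simp [hL, k.isLt]
    have h1 : lam k * e i = ∑ j ∈ Finset.Ico k.val n, D j * e i := by
      rw [← Finset.sum_mul, hLsum, hLn, sub_zero, hk]
    rw [h1]
    have h2 : ∑ j ∈ Finset.Ico k.val n, D j * e i ≤
        ∑ j ∈ Finset.Ico k.val n, (D j * E j + D j * max (e i - E j) 0) := by
      apply Finset.sum_le_sum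
      intro j _
      have : e i ≤ E j + max (e i - E j) 0 := by
        rcases le_max_iff.mpr (Or.inl (le_refl (e i - E j))) with h
        cases' le_total (e i) (E j) with h' h'
        · have : max (e i - E j) 0 = 0 ∨ 0 ≤ max (e i - E j) 0 := Or.inr (le_max_right _ _)
          nlinarith [le_max_right (e i - E j) (0:ℝ)]
        · nlinarith [le_max_left (e i - E j) (0:ℝ)]
      nlinarith [hD0 j]
    refine h2.trans ?_
    rw [Finset.sum_add_distrib]
    refine add_le_add le_rfl ?_
    apply Finset.sum_le_sum_of_subset_of_nonneg
    · intro x hx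
      simp only [Finset.mem_Ico, Finset.mem_range] at *
      omega
    · intro j _ _
      exact mul_nonneg (hD0 j) (le_max_right _ _)
  constructor
  · -- membership: the pair (u, v) attains OM
    refine ⟨u, v, hfeas, ?_⟩
    -- key rearrangement: sum over e equals sum over d
    have hperm : ∀ f : ℝ → ℝ, ∑ i : Fin n, f (e i) = ∑ i : Fin n, f (d i) := by
      intro f
      exact (Fintype.sum_equiv (Fin.revPerm.trans σ)
        (fun i => f (e ((Fin.revPerm.trans σ) i))) (fun i => f (e i)) (fun i => rfl)).symm
    have hdE : ∀ i : Fin n, d i = E i.val := by intro i; simp [hE, i.isLt]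
    have key1 : ∀ j < n, ∑ i : Fin n, max (e i - E j) 0 =
        (∑ i ∈ Finset.range (j + 1), E i) - (j + 1) * E j := by
      intro j hj
      rw [hperm (fun t => max (t - E j) 0)]
      have : ∑ i : Fin n, max (d i - E j) 0 = ∑ i ∈ Finset.range n, max (E i - E j) 0 := by
        rw [← Fin.sum_univ_eq_sum_range (fun i => max (E i - E j) 0) n]
        exact Finset.sum_congr rfl fun i _ => by rw [hdE]
      rw [this, ← Finset.sum_range_add_sum_Ico _ (by omega : j + 1 ≤ n)]
      have hz : ∑ i ∈ Finset.Ico (j + 1) n, max (E i - E j) 0 = 0 := by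
        apply Finset.sum_eq_zero
        intro i hi
        simp only [Finset.mem_Ico] at hi
        have : E i ≤ E j := hEanti (by omega)
        simp [max_eq_right, sub_nonpos.mpr this]
      rw [hz, add_zero]
      have : ∑ i ∈ Finset.range (j + 1), max (E i - E j) 0
          = ∑ i ∈ Finset.range (j + 1), (E i - E j) := by
        apply Finset.sum_congr rfl
        intro i hi
        simp only [Finset.mem_range] at hi
        have : E j ≤ E i := hEanti (by omega)
        simp [max_eq_left, sub_nonneg.mpr this]
      rw [this, Finset.sum_sub_distrib, Finset.sum_const, Finset.card_range]
      push_cast; ring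
    -- compute ∑ v
    have hsumv : ∑ i : Fin n, v i =
        ∑ j ∈ Finset.range n, D j * ((∑ i ∈ Finset.range (j + 1), E i) - (j + 1) * E j) := by
      simp only [hv]
      rw [Finset.sum_comm]
      apply Finset.sum_congr rfl
      intro j hj
      simp only [Finset.mem_range] at hj
      rw [← Finset.mul_sum, key1 j hj]
    -- compute ∑ u
    have hsumu : ∑ k : Fin n, u k =
        ∑ j ∈ Finset.range n, ((j : ℝ) + 1) * (D j * E j) := by
      simp only [hu]
      rw [Fin.sum_univ_eq_sum_range (fun k => ∑ j ∈ Finset.Ico k n, D j * E j) n]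
      rw [Finset.sum_comm' (s' := fun j => Finset.range (j + 1)) (t' := Finset.range n)
        (by intro x y; simp only [Finset.mem_Ico, Finset.mem_range]; omega)]
      apply Finset.sum_congr rfl
      intro j hj
      rw [Finset.sum_const, Finset.card_range, nsmul_eq_mul]
      push_cast; ring
    have hfin : ∑ i : Fin n, lam i * d i = ∑ i ∈ Finset.range n, L i * E i := by
      rw [← Fin.sum_univ_eq_sum_range (fun i => L i * E i) n]
      apply Finset.sum_congr rfl
      intro i _
      simp [hL, hE, i.isLt]
    rw [hOM, hsumu, hsumv, ← Finset.sum_add_distrib, hfin]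
    have step1 : ∑ j ∈ Finset.range n,
        (((j : ℝ) + 1) * (D j * E j)
          + D j * ((∑ i ∈ Finset.range (j + 1), E i) - ((j : ℝ) + 1) * E j))
        = ∑ j ∈ Finset.range n, ∑ i ∈ Finset.range (j + 1), D j * E i := by
      apply Finset.sum_congr rfl
      intro j _
      rw [← Finset.mul_sum]
      ring
    rw [step1]
    rw [Finset.sum_comm' (s' := fun i => Finset.Ico i n) (t' := Finset.range n)
      (by intro x y; simp only [Finset.mem_Ico, Finset.mem_range]; omega)]
    apply Finset.sum_congr rfl
    intro i _
    rw [← Finset.sum_mul, hLsum, hLn, sub_zero]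
  · -- lower bound
    rintro x ⟨u', v', hf, rfl⟩
    have h2 : ∑ i : Fin n, v' i = ∑ k : Fin n, v' (σ k.rev) :=
      (Fintype.sum_equiv (Fin.revPerm.trans σ) (fun i => v' ((Fin.revPerm.trans σ) i))
        (fun i => v' i) (fun i => rfl)).symm
    rw [hOM, h2, ← Finset.sum_add_distrib]
    exact Finset.sum_le_sum fun k _ => hf (σ k.rev) k
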